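/- Let w ∈ ℝ^d be nonzero and ν ∈ ℝ^d with ⟨w, ν⟩ > 0. Then the matrix M = ‖w‖² I_d − w wᵀ + (ν νᵀ)/⟨w, ν⟩ is symmetric positive definite and satisfies M w = ν. -/

import Mathlib

open Matrix

lemma vmv_mulVec {d : ℕ} (a b x : Fin d → ℝ) :
    vecMulVec a b *ᵥ x = (b ⬝ᵥ x) • a := by
  funext i
  simp [vecMulVec_apply, mulVec, dotProduct, Finset.mul_sum, mul_assoc, mul_comm, mul_left_comm]

lemma dp_self_nonneg {d : ℕ} (v : Fin d → ℝ) : 0 ≤ v ⬝ᵥ v :=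
  Finset.sum_nonneg fun i _ => mul_self_nonneg (v i)

lemma dp_self_pos {d : ℕ} {v : Fin d → ℝ} (hv : v ≠ 0) : 0 < v ⬝ᵥ v :=
  lt_of_le_of_ne (dp_self_nonneg v) fun h => hv (dotProduct_self_eq_zero.mp h.symm)

theorem stmt_4 (d : ℕ) (w ν : Fin d → ℝ) (hw : w ≠ 0) (hpos : 0 < w ⬝ᵥ ν) :
    ((w ⬝ᵥ w) • (1 : Matrix (Fin d) (Fin d) ℝ) - vecMulVec w w +
        (w ⬝ᵥ ν)⁻¹ • vecMulVec ν ν).PosDef ∧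
    ((w ⬝ᵥ w) • (1 : Matrix (Fin d) (Fin d) ℝ) - vecMulVec w w +
        (w ⬝ᵥ ν)⁻¹ • vecMulVec ν ν) *ᵥ w = ν := by
  have hwW : 0 < w ⬝ᵥ w := dp_self_pos hw
  have hmul : ∀ x : Fin d → ℝ,
      ((w ⬝ᵥ w) • (1 : Matrix (Fin d) (Fin d) ℝ) - vecMulVec w w +
        (w ⬝ᵥ ν)⁻¹ • vecMulVec ν ν) *ᵥ x
      = (w ⬝ᵥ w) • x - (w ⬝ᵥ x) • w + ((w ⬝ᵥ ν)⁻¹ * (ν ⬝ᵥ x)) • ν := by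
    intro x
    rw [add_mulVec, sub_mulVec, smul_mulVec, smul_mulVec, one_mulVec,
      vmv_mulVec, vmv_mulVec, smul_smul]
  constructor
  · rw [posDef_iff_dotProduct_mulVec]
    constructor
    · ext i j
      simp only [conjTranspose_apply, Matrix.sub_apply, Matrix.add_apply, Matrix.smul_apply, one_apply,
        vecMulVec_apply, smul_eq_mul, star_trivial]
      rw [mul_comm (w i) (w j), mul_comm (ν i) (ν j)]
      by_cases h : i = j
      · subst h; simp
      · simp [h, Ne.symm h]
    · intro x hx
      rw [hmul]
      have hsx : star x = x := rfl
      rw [hsx, dotProduct_add, dotProduct_sub, dotProduct_smul, dotProduct_smul,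
        dotProduct_smul, smul_eq_mul, smul_eq_mul, smul_eq_mul]
      have hcomm : x ⬝ᵥ w = w ⬝ᵥ x := dotProduct_comm x w
      have hcν : ν ⬝ᵥ x = x ⬝ᵥ ν := dotProduct_comm ν x
      set c : ℝ := (x ⬝ᵥ w) / (w ⬝ᵥ w) with hc
      by_cases hy : x - c • w = 0
      · -- x = c • w
        have hxcw : x = c • w := by rwa [sub_eq_zero] at hy
        have hcne : c ≠ 0 := fun hc0 => hx (by rw [hxcw, hc0, zero_smul])
        have h1 : x ⬝ᵥ x = c * c * (w ⬝ᵥ w) := by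
          rw [hxcw, smul_dotProduct, dotProduct_smul, smul_eq_mul, smul_eq_mul]; ring
        have h2 : w ⬝ᵥ x = c * (w ⬝ᵥ w) := by
          rw [hxcw, dotProduct_smul, smul_eq_mul]
        have h3 : x ⬝ᵥ ν = c * (w ⬝ᵥ ν) := by
          rw [hxcw, smul_dotProduct, smul_eq_mul]
        rw [h1, h2, hcν, h3, hcomm, h2]
        have : (w ⬝ᵥ w) * (c * c * (w ⬝ᵥ w)) - c * (w ⬝ᵥ w) * (c * (w ⬝ᵥ w)) +
            (w ⬝ᵥ ν)⁻¹ * (c * (w ⬝ᵥ ν)) * (c * (w ⬝ᵥ ν)) = c * c * (w ⬝ᵥ ν) := by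
          field_simp; ring
        rw [this]
        have : 0 < c * c := mul_self_pos.mpr hcne
        positivity
      · -- y ≠ 0
        set y := x - c • w with hy'
        have hyy : 0 < y ⬝ᵥ y := dp_self_pos hy
        have hexp : (w ⬝ᵥ w) * (y ⬝ᵥ y) = (w ⬝ᵥ w) * (x ⬝ᵥ x) - (x ⬝ᵥ w) * (w ⬝ᵥ x) := by
          rw [hy', sub_dotProduct, dotProduct_sub, dotProduct_sub, smul_dotProduct,
            dotProduct_smul, dotProduct_smul, smul_eq_mul, smul_eq_mul, smul_eq_mul, hc]
          field_simp
          rw [smul_dotProduct, smul_eq_mul, div_mul_cancel₀ _ hwW.ne']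
          ring
        have h6 : 0 ≤ (w ⬝ᵥ ν)⁻¹ * (ν ⬝ᵥ x) * (x ⬝ᵥ ν) := by
          rw [hcν]
          have hi : 0 < (w ⬝ᵥ ν)⁻¹ := inv_pos.mpr hpos
          nlinarith [sq_nonneg (x ⬝ᵥ ν)]
        nlinarith [mul_pos hwW hyy, hcomm]
  · rw [hmul]
    have : ν ⬝ᵥ w = w ⬝ᵥ ν := dotProduct_comm ν w
    rw [this, inv_mul_cancel₀ (ne_of_gt hpos), one_smul]
    abel
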